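/- Let ζ₃ = e^{2πi/3} and ζ₈ = e^{2πi/8}, and let G ≤ SL(4,ℂ) be the subgroup generated by the five matrices diag(ζ₃, 1, 1, ζ₃⁻¹), diag(1, ζ₃, 1, ζ₃⁻¹), diag(1, 1, ζ₃, ζ₃⁻¹), ζ₈·P₍₁₂₎ (where P₍₁₂₎ is the permutation matrix exchanging the first two coordinates and fixing the last two), and P₍₁₃₎₍₂₄₎ (the permutation matrix exchanging the first coordinate with the third and the second with the fourth). Then G is contained in SL(4,ℂ), G acts irreducibly on ℂ⁴, and the cubic form x³ + y³ + u³ + v³ is a semi-invariant of G. -/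

import Mathlib

open Matrix MvPolynomial

noncomputable def zeta3 : ℂ := Complex.exp (2 * Real.pi * Complex.I / 3)
noncomputable def zeta8 : ℂ := Complex.exp (2 * Real.pi * Complex.I / 8)

lemma zeta3_ne : zeta3 ≠ 0 := Complex.exp_ne_zero _
lemma zeta8_ne : zeta8 ≠ 0 := Complex.exp_ne_zero _

lemma zeta3_cube : zeta3 ^ 3 = 1 := by
  rw [zeta3, ← Complex.exp_nat_mul]
  norm_num
  rw [show (3:ℂ) * (2 * Real.pi * Complex.I / 3) = 2 * Real.pi * Complex.I by ring]
  exact Complex.exp_two_pi_mul_I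

lemma zeta8_pow4 : zeta8 ^ 4 = -1 := by
  rw [zeta8, ← Complex.exp_nat_mul]
  norm_num
  rw [show (4:ℂ) * (2 * Real.pi * Complex.I / 8) = Real.pi * Complex.I by ring]
  exact Complex.exp_pi_mul_I

lemma zeta3_inv : zeta3⁻¹ = zeta3 ^ 2 := by
  refine inv_eq_of_mul_eq_one_left ?_
  linear_combination zeta3_cube

lemma zeta3_ne_one : zeta3 ≠ 1 := by
  rw [zeta3]
  intro h
  obtain ⟨n, hn⟩ := Complex.exp_eq_one_iff.mp h
  have h2 : (2 * Real.pi * Complex.I) * (1/3 - n) = 0 := by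
    linear_combination hn
  have hne : (2 * (Real.pi:ℂ) * Complex.I) ≠ 0 := by
    simp [Real.pi_ne_zero, Complex.I_ne_zero, Complex.ofReal_ne_zero]
  have h3 : (1/3 - n : ℂ) = 0 := by
    rcases mul_eq_zero.mp h2 with h | h
    · exact absurd h hne
    · exact h
  have h4 : ((3 * n : ℤ) : ℂ) = ((1:ℤ) : ℂ) := by push_cast; linear_combination (-3:ℂ) * h3
  have h5 : (3 * n : ℤ) = 1 := by exact_mod_cast h4
  omega

lemma zeta3_sum : 1 + zeta3 + zeta3 ^ 2 = 0 := by
  have h : (zeta3 - 1) * (1 + zeta3 + zeta3 ^ 2) = 0 := by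
    linear_combination zeta3_cube
  rcases mul_eq_zero.mp h with h | h
  · exact absurd (by linear_combination h) zeta3_ne_one
  · exact h

/-- The subgroup of `GL(4, ℂ)` generated by `diag(ζ₃,1,1,ζ₃⁻¹)`, `diag(1,ζ₃,1,ζ₃⁻¹)`,
`diag(1,1,ζ₃,ζ₃⁻¹)`, `ζ₈·P₍₁₂₎` and `P₍₁₃₎₍₂₄₎`. -/
noncomputable def monomialGroup : Subgroup (GL (Fin 4) ℂ) :=
  Subgroup.closure
    {g | (g : Matrix (Fin 4) (Fin 4) ℂ) = Matrix.diagonal ![zeta3, 1, 1, zeta3⁻¹] ∨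
      (g : Matrix (Fin 4) (Fin 4) ℂ) = Matrix.diagonal ![1, zeta3, 1, zeta3⁻¹] ∨
      (g : Matrix (Fin 4) (Fin 4) ℂ) = Matrix.diagonal ![1, 1, zeta3, zeta3⁻¹] ∨
      (g : Matrix (Fin 4) (Fin 4) ℂ) =
        zeta8 • (!![0, 1, 0, 0; 1, 0, 0, 0; 0, 0, 1, 0; 0, 0, 0, 1] :
          Matrix (Fin 4) (Fin 4) ℂ) ∨
      (g : Matrix (Fin 4) (Fin 4) ℂ) =
        (!![0, 0, 1, 0; 0, 0, 0, 1; 1, 0, 0, 0; 0, 1, 0, 0] : Matrix (Fin 4) (Fin 4) ℂ)}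

section gens

noncomputable def D1 : GL (Fin 4) ℂ :=
  ⟨Matrix.diagonal ![zeta3, 1, 1, zeta3⁻¹], Matrix.diagonal ![zeta3⁻¹, 1, 1, zeta3], by
    ext i j
    fin_cases i <;> fin_cases j <;>
      simp [Matrix.mul_apply, Fin.sum_univ_four, Matrix.one_apply, Matrix.diagonal,
        Matrix.vecHead, Matrix.vecTail, mul_inv_cancel₀ zeta3_ne, inv_mul_cancel₀ zeta3_ne,
        mul_inv_cancel₀ zeta8_ne, inv_mul_cancel₀ zeta8_ne], by
    ext i j
    fin_cases i <;> fin_cases j <;>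
      simp [Matrix.mul_apply, Fin.sum_univ_four, Matrix.one_apply, Matrix.diagonal,
        Matrix.vecHead, Matrix.vecTail, mul_inv_cancel₀ zeta3_ne, inv_mul_cancel₀ zeta3_ne,
        mul_inv_cancel₀ zeta8_ne, inv_mul_cancel₀ zeta8_ne]⟩

noncomputable def D2 : GL (Fin 4) ℂ :=
  ⟨Matrix.diagonal ![1, zeta3, 1, zeta3⁻¹], Matrix.diagonal ![1, zeta3⁻¹, 1, zeta3], by
    ext i j
    fin_cases i <;> fin_cases j <;>
      simp [Matrix.mul_apply, Fin.sum_univ_four, Matrix.one_apply, Matrix.diagonal,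
        Matrix.vecHead, Matrix.vecTail, mul_inv_cancel₀ zeta3_ne, inv_mul_cancel₀ zeta3_ne,
        mul_inv_cancel₀ zeta8_ne, inv_mul_cancel₀ zeta8_ne], by
    ext i j
    fin_cases i <;> fin_cases j <;>
      simp [Matrix.mul_apply, Fin.sum_univ_four, Matrix.one_apply, Matrix.diagonal,
        Matrix.vecHead, Matrix.vecTail, mul_inv_cancel₀ zeta3_ne, inv_mul_cancel₀ zeta3_ne,
        mul_inv_cancel₀ zeta8_ne, inv_mul_cancel₀ zeta8_ne]⟩

noncomputable def D3 : GL (Fin 4) ℂ :=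
  ⟨Matrix.diagonal ![1, 1, zeta3, zeta3⁻¹], Matrix.diagonal ![1, 1, zeta3⁻¹, zeta3], by
    ext i j
    fin_cases i <;> fin_cases j <;>
      simp [Matrix.mul_apply, Fin.sum_univ_four, Matrix.one_apply, Matrix.diagonal,
        Matrix.vecHead, Matrix.vecTail, mul_inv_cancel₀ zeta3_ne, inv_mul_cancel₀ zeta3_ne,
        mul_inv_cancel₀ zeta8_ne, inv_mul_cancel₀ zeta8_ne], by
    ext i j
    fin_cases i <;> fin_cases j <;>
      simp [Matrix.mul_apply, Fin.sum_univ_four, Matrix.one_apply, Matrix.diagonal,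
        Matrix.vecHead, Matrix.vecTail, mul_inv_cancel₀ zeta3_ne, inv_mul_cancel₀ zeta3_ne,
        mul_inv_cancel₀ zeta8_ne, inv_mul_cancel₀ zeta8_ne]⟩

noncomputable def P12 : GL (Fin 4) ℂ :=
  ⟨zeta8 • (!![0, 1, 0, 0; 1, 0, 0, 0; 0, 0, 1, 0; 0, 0, 0, 1] : Matrix (Fin 4) (Fin 4) ℂ),
   zeta8⁻¹ • (!![0, 1, 0, 0; 1, 0, 0, 0; 0, 0, 1, 0; 0, 0, 0, 1] : Matrix (Fin 4) (Fin 4) ℂ), by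
    ext i j
    fin_cases i <;> fin_cases j <;>
      simp [Matrix.mul_apply, Fin.sum_univ_four, Matrix.one_apply, Matrix.diagonal,
        Matrix.vecHead, Matrix.vecTail, mul_inv_cancel₀ zeta3_ne, inv_mul_cancel₀ zeta3_ne,
        mul_inv_cancel₀ zeta8_ne, inv_mul_cancel₀ zeta8_ne], by
    ext i j
    fin_cases i <;> fin_cases j <;>
      simp [Matrix.mul_apply, Fin.sum_univ_four, Matrix.one_apply, Matrix.diagonal,
        Matrix.vecHead, Matrix.vecTail, mul_inv_cancel₀ zeta3_ne, inv_mul_cancel₀ zeta3_ne,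
        mul_inv_cancel₀ zeta8_ne, inv_mul_cancel₀ zeta8_ne]⟩

noncomputable def Q34 : GL (Fin 4) ℂ :=
  ⟨(!![0, 0, 1, 0; 0, 0, 0, 1; 1, 0, 0, 0; 0, 1, 0, 0] : Matrix (Fin 4) (Fin 4) ℂ),
   (!![0, 0, 1, 0; 0, 0, 0, 1; 1, 0, 0, 0; 0, 1, 0, 0] : Matrix (Fin 4) (Fin 4) ℂ), by
    ext i j
    fin_cases i <;> fin_cases j <;>
      simp [Matrix.mul_apply, Fin.sum_univ_four, Matrix.one_apply, Matrix.diagonal,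
        Matrix.vecHead, Matrix.vecTail, mul_inv_cancel₀ zeta3_ne, inv_mul_cancel₀ zeta3_ne,
        mul_inv_cancel₀ zeta8_ne, inv_mul_cancel₀ zeta8_ne], by
    ext i j
    fin_cases i <;> fin_cases j <;>
      simp [Matrix.mul_apply, Fin.sum_univ_four, Matrix.one_apply, Matrix.diagonal,
        Matrix.vecHead, Matrix.vecTail, mul_inv_cancel₀ zeta3_ne, inv_mul_cancel₀ zeta3_ne,
        mul_inv_cancel₀ zeta8_ne, inv_mul_cancel₀ zeta8_ne]⟩

lemma D1_mem : D1 ∈ monomialGroup := Subgroup.subset_closure (by left; rfl)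
lemma D2_mem : D2 ∈ monomialGroup := Subgroup.subset_closure (by right; left; rfl)
lemma D3_mem : D3 ∈ monomialGroup := Subgroup.subset_closure (by right; right; left; rfl)
lemma P12_mem : P12 ∈ monomialGroup := Subgroup.subset_closure (by right; right; right; left; rfl)
lemma Q34_mem : Q34 ∈ monomialGroup := Subgroup.subset_closure (by right; right; right; right; rfl)

end gens

lemma mono_det : ∀ g ∈ monomialGroup, Matrix.det (g : Matrix (Fin 4) (Fin 4) ℂ) = 1 := by
  have hle : monomialGroup ≤ (Matrix.GeneralLinearGroup.det :
      GL (Fin 4) ℂ →* ℂˣ).ker := by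
    rw [monomialGroup, Subgroup.closure_le]
    rintro g (h | h | h | h | h) <;>
    · rw [SetLike.mem_coe, MonoidHom.mem_ker]
      apply Units.ext
      rw [Matrix.GeneralLinearGroup.val_det_apply, h, Units.val_one]
      simp [Matrix.det_smul, Matrix.det_diagonal, Fin.prod_univ_four,
        Matrix.det_succ_row_zero, Fin.sum_univ_succ, Fin.succAbove, mul_inv_cancel₀ zeta3_ne]
      try linear_combination -zeta8_pow4
  intro g hg
  have := hle hg
  rw [MonoidHom.mem_ker] at this
  have h2 := congrArg Units.val this
  rwa [Matrix.GeneralLinearGroup.val_det_apply, Units.val_one] at h2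

lemma D1_mulVec (v : Fin 4 → ℂ) :
    (D1 : Matrix (Fin 4) (Fin 4) ℂ) *ᵥ v = ![zeta3 * v 0, v 1, v 2, zeta3⁻¹ * v 3] := by
  funext i; fin_cases i <;> simp [D1, Matrix.mulVec_diagonal]

lemma D2_mulVec (v : Fin 4 → ℂ) :
    (D2 : Matrix (Fin 4) (Fin 4) ℂ) *ᵥ v = ![v 0, zeta3 * v 1, v 2, zeta3⁻¹ * v 3] := by
  funext i; fin_cases i <;> simp [D2, Matrix.mulVec_diagonal]

lemma D3_mulVec (v : Fin 4 → ℂ) :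
    (D3 : Matrix (Fin 4) (Fin 4) ℂ) *ᵥ v = ![v 0, v 1, zeta3 * v 2, zeta3⁻¹ * v 3] := by
  funext i; fin_cases i <;> simp [D3, Matrix.mulVec_diagonal]

lemma P12_mulVec (v : Fin 4 → ℂ) :
    (P12 : Matrix (Fin 4) (Fin 4) ℂ) *ᵥ v = ![zeta8 * v 1, zeta8 * v 0, zeta8 * v 2, zeta8 * v 3] := by
  funext i
  fin_cases i <;> simp [P12, Matrix.mulVec, dotProduct, Fin.sum_univ_four]

lemma Q34_mulVec (v : Fin 4 → ℂ) :
    (Q34 : Matrix (Fin 4) (Fin 4) ℂ) *ᵥ v = ![v 2, v 3, v 0, v 1] := by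
  funext i
  fin_cases i <;> simp [Q34, Matrix.mulVec, dotProduct, Fin.sum_univ_four]

/-! ### Semi-invariance -/

noncomputable def fcub (v : Fin 4 → ℂ) : ℂ := v 0 ^ 3 + v 1 ^ 3 + v 2 ^ 3 + v 3 ^ 3

noncomputable def w₀ : Fin 4 → ℂ := ![1, 0, 0, 0]

lemma fcub_w₀ : fcub w₀ = 1 := by simp [fcub, w₀]

noncomputable def Ssub : Subgroup (GL (Fin 4) ℂ) where
  carrier := {g | ∃ c : ℂ, ∀ v, fcub ((g : Matrix (Fin 4) (Fin 4) ℂ) *ᵥ v) = c * fcub v}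
  one_mem' := ⟨1, fun v => by simp [Units.val_one, Matrix.one_mulVec]⟩
  mul_mem' := by
    rintro a b ⟨ca, hca⟩ ⟨cb, hcb⟩
    refine ⟨ca * cb, fun v => ?_⟩
    rw [Units.val_mul, ← Matrix.mulVec_mulVec, hca, hcb, mul_assoc]
  inv_mem' := by
    rintro g ⟨c, hc⟩
    have key : ∀ w, fcub w = c * fcub ((g⁻¹ : GL (Fin 4) ℂ) *ᵥ w) := by
      intro w
      have := hc ((g⁻¹ : GL (Fin 4) ℂ) *ᵥ w)
      rwa [Matrix.mulVec_mulVec, ← Units.val_mul, mul_inv_cancel, Units.val_one,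
        Matrix.one_mulVec] at this
    have hc0 : c ≠ 0 := by
      intro h
      have := key w₀
      rw [fcub_w₀, h, zero_mul] at this
      exact one_ne_zero this
    refine ⟨c⁻¹, fun v => ?_⟩
    rw [key v, inv_mul_cancel_left₀ hc0]

lemma mono_le_S : monomialGroup ≤ Ssub := by
  rw [monomialGroup, Subgroup.closure_le]
  rintro g (h | h | h | h | h)
  · refine ⟨1, fun v => ?_⟩
    rw [h]
    have h3i : zeta3⁻¹ ^ 3 = 1 := by rw [inv_pow, zeta3_cube, inv_one]
    simp only [fcub, Matrix.mulVec_diagonal]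
    simp
    linear_combination (v 0 ^ 3) * zeta3_cube + (v 3 ^ 3) * h3i
  · refine ⟨1, fun v => ?_⟩
    rw [h]
    have h3i : zeta3⁻¹ ^ 3 = 1 := by rw [inv_pow, zeta3_cube, inv_one]
    simp only [fcub, Matrix.mulVec_diagonal]
    simp
    linear_combination (v 1 ^ 3) * zeta3_cube + (v 3 ^ 3) * h3i
  · refine ⟨1, fun v => ?_⟩
    rw [h]
    have h3i : zeta3⁻¹ ^ 3 = 1 := by rw [inv_pow, zeta3_cube, inv_one]
    simp only [fcub, Matrix.mulVec_diagonal]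
    simp
    linear_combination (v 2 ^ 3) * zeta3_cube + (v 3 ^ 3) * h3i
  · refine ⟨zeta8 ^ 3, fun v => ?_⟩
    rw [h]
    simp only [fcub, Matrix.mulVec, dotProduct, Fin.sum_univ_four]
    simp [Matrix.vecHead, Matrix.vecTail]
    ring
  · refine ⟨1, fun v => ?_⟩
    rw [h]
    simp only [fcub, Matrix.mulVec, dotProduct, Fin.sum_univ_four]
    simp [Matrix.vecHead, Matrix.vecTail]
    ring

lemma mono_key (g : monomialGroup) (v : Fin 4 → ℂ) :
    fcub ((((g : GL (Fin 4) ℂ)⁻¹ : GL (Fin 4) ℂ) : Matrix (Fin 4) (Fin 4) ℂ) *ᵥ v)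
      = fcub ((((g : GL (Fin 4) ℂ)⁻¹ : GL (Fin 4) ℂ) : Matrix (Fin 4) (Fin 4) ℂ) *ᵥ w₀)
        * fcub v := by
  have hmem : ((g : GL (Fin 4) ℂ)⁻¹ : GL (Fin 4) ℂ) ∈ Ssub := by
    apply mono_le_S
    exact inv_mem g.2
  obtain ⟨c, hc⟩ := hmem
  rw [hc v, hc w₀, fcub_w₀, mul_one]

noncomputable def chi : monomialGroup →* ℂˣ where
  toFun g :=
    { val := fcub ((((g : GL (Fin 4) ℂ)⁻¹ : GL (Fin 4) ℂ) : Matrix (Fin 4) (Fin 4) ℂ) *ᵥ w₀)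
      inv := fcub (((g : GL (Fin 4) ℂ) : Matrix (Fin 4) (Fin 4) ℂ) *ᵥ w₀)
      val_inv := by
        have := mono_key g (((g : GL (Fin 4) ℂ) : Matrix (Fin 4) (Fin 4) ℂ) *ᵥ w₀)
        rw [Matrix.mulVec_mulVec, ← Units.val_mul, inv_mul_cancel, Units.val_one,
          Matrix.one_mulVec, fcub_w₀] at this
        exact this.symm
      inv_val := by
        have := mono_key g⁻¹ ((((g : GL (Fin 4) ℂ)⁻¹ : GL (Fin 4) ℂ) :
          Matrix (Fin 4) (Fin 4) ℂ) *ᵥ w₀)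
        simp only [InvMemClass.coe_inv, inv_inv] at this
        rw [Matrix.mulVec_mulVec, ← Units.val_mul, mul_inv_cancel, Units.val_one,
          Matrix.one_mulVec, fcub_w₀] at this
        exact this.symm }
  map_one' := by
    apply Units.ext
    simp only [OneMemClass.coe_one, inv_one, Units.val_one, Matrix.one_mulVec]
    exact fcub_w₀
  map_mul' g h := by
    apply Units.ext
    show fcub _ = fcub _ * fcub _
    have hco : (((g * h : monomialGroup) : GL (Fin 4) ℂ)⁻¹ : GL (Fin 4) ℂ)
        = ((h : GL (Fin 4) ℂ)⁻¹ * (g : GL (Fin 4) ℂ)⁻¹ : GL (Fin 4) ℂ) := by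
      rw [Subgroup.coe_mul, _root_.mul_inv_rev]
    rw [hco, Units.val_mul, ← Matrix.mulVec_mulVec]
    rw [mono_key h]
    ring

lemma mono_semiinv :
    ∃ χ : monomialGroup →* ℂˣ, ∀ (g : monomialGroup) (v : Fin 4 → ℂ),
      MvPolynomial.eval
          (Matrix.mulVec (((g : GL (Fin 4) ℂ)⁻¹ : GL (Fin 4) ℂ) : Matrix (Fin 4) (Fin 4) ℂ) v)
          (X 0 ^ 3 + X 1 ^ 3 + X 2 ^ 3 + X 3 ^ 3 : MvPolynomial (Fin 4) ℂ)
        = (χ g : ℂ) *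
          MvPolynomial.eval v (X 0 ^ 3 + X 1 ^ 3 + X 2 ^ 3 + X 3 ^ 3 : MvPolynomial (Fin 4) ℂ) := by
  refine ⟨chi, fun g v => ?_⟩
  have h := mono_key g v
  simp only [MvPolynomial.eval_add, MvPolynomial.eval_pow, MvPolynomial.eval_X]
  show fcub _ = _ * fcub _
  exact h

/-! ### Irreducibility -/

noncomputable def E : Fin 4 → Fin 4 → ℂ := fun i j => if i = j then 1 else 0

lemma mono_irred (W : Submodule ℂ (Fin 4 → ℂ))
    (hW : ∀ g ∈ monomialGroup, ∀ v ∈ W, Matrix.mulVec (g : Matrix (Fin 4) (Fin 4) ℂ) v ∈ W) :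
    W = ⊥ ∨ W = ⊤ := by
  by_cases hbot : W = ⊥
  · exact Or.inl hbot
  right
  obtain ⟨v, hv, hv0⟩ := Submodule.ne_bot_iff W |>.mp hbot
  obtain ⟨i, hi⟩ : ∃ i, v i ≠ 0 := by
    by_contra h
    push_neg at h
    exact hv0 (funext h)
  -- transfer lemmas
  have t01 : E 0 ∈ W → E 1 ∈ W := by
    intro h
    have h1 := hW P12 P12_mem _ h
    rw [P12_mulVec] at h1
    have h2 := Submodule.smul_mem W zeta8⁻¹ h1
    convert h2 using 1
    funext j
    fin_cases j <;> simp [E, inv_mul_cancel₀ zeta8_ne]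
  have t10 : E 1 ∈ W → E 0 ∈ W := by
    intro h
    have h1 := hW P12 P12_mem _ h
    rw [P12_mulVec] at h1
    have h2 := Submodule.smul_mem W zeta8⁻¹ h1
    convert h2 using 1
    funext j
    fin_cases j <;> simp [E, inv_mul_cancel₀ zeta8_ne]
  have t02 : E 0 ∈ W → E 2 ∈ W := by
    intro h
    have h1 := hW Q34 Q34_mem _ h
    rw [Q34_mulVec] at h1
    convert h1 using 1
    funext j
    fin_cases j <;> simp [E]
  have t20 : E 2 ∈ W → E 0 ∈ W := by
    intro h
    have h1 := hW Q34 Q34_mem _ h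
    rw [Q34_mulVec] at h1
    convert h1 using 1
    funext j
    fin_cases j <;> simp [E]
  have t13 : E 1 ∈ W → E 3 ∈ W := by
    intro h
    have h1 := hW Q34 Q34_mem _ h
    rw [Q34_mulVec] at h1
    convert h1 using 1
    funext j
    fin_cases j <;> simp [E]
  have t31 : E 3 ∈ W → E 1 ∈ W := by
    intro h
    have h1 := hW Q34 Q34_mem _ h
    rw [Q34_mulVec] at h1
    convert h1 using 1
    funext j
    fin_cases j <;> simp [E]
  -- extraction of a basis vector
  have hE0 : E 0 ∈ W := by
    fin_cases i
    · -- v 0 ≠ 0, use D1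
      have h1 := hW D1 D1_mem v hv
      have h2 := hW D1 D1_mem _ h1
      have hu : v + zeta3 ^ 2 • ((D1 : Matrix (Fin 4) (Fin 4) ℂ) *ᵥ v)
          + zeta3 • ((D1 : Matrix (Fin 4) (Fin 4) ℂ) *ᵥ ((D1 : Matrix (Fin 4) (Fin 4) ℂ) *ᵥ v)) ∈ W :=
        add_mem (add_mem hv (Submodule.smul_mem W _ h1)) (Submodule.smul_mem W _ h2)
      have heq : v + zeta3 ^ 2 • ((D1 : Matrix (Fin 4) (Fin 4) ℂ) *ᵥ v)
          + zeta3 • ((D1 : Matrix (Fin 4) (Fin 4) ℂ) *ᵥ ((D1 : Matrix (Fin 4) (Fin 4) ℂ) *ᵥ v))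
          = (3 * v 0) • E 0 := by
        rw [D1_mulVec v, D1_mulVec]
        funext j
        fin_cases j
        · simp [E, zeta3_inv, Matrix.vecHead, Matrix.vecTail, show (2:Fin 3).succ = 3 from rfl]
          linear_combination 2 * v 0 * zeta3_cube
        · simp [E, zeta3_inv, Matrix.vecHead, Matrix.vecTail, show (2:Fin 3).succ = 3 from rfl]
          linear_combination v 1 * zeta3_sum
        · simp [E, zeta3_inv, Matrix.vecHead, Matrix.vecTail, show (2:Fin 3).succ = 3 from rfl]
          linear_combination v 2 * zeta3_sum
        · simp [E, zeta3_inv, Matrix.vecHead, Matrix.vecTail, show (2:Fin 3).succ = 3 from rfl]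
          linear_combination v 3 * zeta3_sum + (zeta3 + zeta3 ^ 2) * v 3 * zeta3_cube
      rw [heq] at hu
      have h3 := Submodule.smul_mem W (3 * v 0)⁻¹ hu
      rwa [smul_smul, inv_mul_cancel₀ (mul_ne_zero three_ne_zero (by simpa using hi)),
        one_smul] at h3
    · -- v 1 ≠ 0, use D2
      have h1 := hW D2 D2_mem v hv
      have h2 := hW D2 D2_mem _ h1
      have hu : v + zeta3 ^ 2 • ((D2 : Matrix (Fin 4) (Fin 4) ℂ) *ᵥ v)
          + zeta3 • ((D2 : Matrix (Fin 4) (Fin 4) ℂ) *ᵥ ((D2 : Matrix (Fin 4) (Fin 4) ℂ) *ᵥ v)) ∈ W :=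
        add_mem (add_mem hv (Submodule.smul_mem W _ h1)) (Submodule.smul_mem W _ h2)
      have heq : v + zeta3 ^ 2 • ((D2 : Matrix (Fin 4) (Fin 4) ℂ) *ᵥ v)
          + zeta3 • ((D2 : Matrix (Fin 4) (Fin 4) ℂ) *ᵥ ((D2 : Matrix (Fin 4) (Fin 4) ℂ) *ᵥ v))
          = (3 * v 1) • E 1 := by
        rw [D2_mulVec v, D2_mulVec]
        funext j
        fin_cases j
        · simp [E, zeta3_inv, Matrix.vecHead, Matrix.vecTail, show (2:Fin 3).succ = 3 from rfl]
          linear_combination v 0 * zeta3_sum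
        · simp [E, zeta3_inv, Matrix.vecHead, Matrix.vecTail, show (2:Fin 3).succ = 3 from rfl]
          linear_combination 2 * v 1 * zeta3_cube
        · simp [E, zeta3_inv, Matrix.vecHead, Matrix.vecTail, show (2:Fin 3).succ = 3 from rfl]
          linear_combination v 2 * zeta3_sum
        · simp [E, zeta3_inv, Matrix.vecHead, Matrix.vecTail, show (2:Fin 3).succ = 3 from rfl]
          linear_combination v 3 * zeta3_sum + (zeta3 + zeta3 ^ 2) * v 3 * zeta3_cube
      rw [heq] at hu
      have h3 := Submodule.smul_mem W (3 * v 1)⁻¹ hu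
      have hE1 : E 1 ∈ W := by
        rwa [smul_smul, inv_mul_cancel₀ (mul_ne_zero three_ne_zero (by simpa using hi)),
          one_smul] at h3
      exact t10 hE1
    · -- v 2 ≠ 0, use D3
      have h1 := hW D3 D3_mem v hv
      have h2 := hW D3 D3_mem _ h1
      have hu : v + zeta3 ^ 2 • ((D3 : Matrix (Fin 4) (Fin 4) ℂ) *ᵥ v)
          + zeta3 • ((D3 : Matrix (Fin 4) (Fin 4) ℂ) *ᵥ ((D3 : Matrix (Fin 4) (Fin 4) ℂ) *ᵥ v)) ∈ W :=
        add_mem (add_mem hv (Submodule.smul_mem W _ h1)) (Submodule.smul_mem W _ h2)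
      have heq : v + zeta3 ^ 2 • ((D3 : Matrix (Fin 4) (Fin 4) ℂ) *ᵥ v)
          + zeta3 • ((D3 : Matrix (Fin 4) (Fin 4) ℂ) *ᵥ ((D3 : Matrix (Fin 4) (Fin 4) ℂ) *ᵥ v))
          = (3 * v 2) • E 2 := by
        rw [D3_mulVec v, D3_mulVec]
        funext j
        fin_cases j
        · simp [E, zeta3_inv, Matrix.vecHead, Matrix.vecTail, show (2:Fin 3).succ = 3 from rfl]
          linear_combination v 0 * zeta3_sum
        · simp [E, zeta3_inv, Matrix.vecHead, Matrix.vecTail, show (2:Fin 3).succ = 3 from rfl]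
          linear_combination v 1 * zeta3_sum
        · simp [E, zeta3_inv, Matrix.vecHead, Matrix.vecTail, show (2:Fin 3).succ = 3 from rfl]
          linear_combination 2 * v 2 * zeta3_cube
        · simp [E, zeta3_inv, Matrix.vecHead, Matrix.vecTail, show (2:Fin 3).succ = 3 from rfl]
          linear_combination v 3 * zeta3_sum + (zeta3 + zeta3 ^ 2) * v 3 * zeta3_cube
      rw [heq] at hu
      have h3 := Submodule.smul_mem W (3 * v 2)⁻¹ hu
      have hE2 : E 2 ∈ W := by
        rwa [smul_smul, inv_mul_cancel₀ (mul_ne_zero three_ne_zero (by simpa using hi)),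
          one_smul] at h3
      exact t20 hE2
    · -- v 3 ≠ 0, use D1 with other coefficients
      have h1 := hW D1 D1_mem v hv
      have h2 := hW D1 D1_mem _ h1
      have hu : v + zeta3 • ((D1 : Matrix (Fin 4) (Fin 4) ℂ) *ᵥ v)
          + zeta3 ^ 2 • ((D1 : Matrix (Fin 4) (Fin 4) ℂ) *ᵥ ((D1 : Matrix (Fin 4) (Fin 4) ℂ) *ᵥ v)) ∈ W :=
        add_mem (add_mem hv (Submodule.smul_mem W _ h1)) (Submodule.smul_mem W _ h2)
      have heq : v + zeta3 • ((D1 : Matrix (Fin 4) (Fin 4) ℂ) *ᵥ v)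
          + zeta3 ^ 2 • ((D1 : Matrix (Fin 4) (Fin 4) ℂ) *ᵥ ((D1 : Matrix (Fin 4) (Fin 4) ℂ) *ᵥ v))
          = (3 * v 3) • E 3 := by
        rw [D1_mulVec v, D1_mulVec]
        funext j
        fin_cases j
        · simp [E, zeta3_inv, Matrix.vecHead, Matrix.vecTail, show (2:Fin 3).succ = 3 from rfl]
          linear_combination v 0 * zeta3_sum + v 0 * zeta3 * zeta3_cube
        · simp [E, zeta3_inv, Matrix.vecHead, Matrix.vecTail, show (2:Fin 3).succ = 3 from rfl]
          linear_combination v 1 * zeta3_sum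
        · simp [E, zeta3_inv, Matrix.vecHead, Matrix.vecTail, show (2:Fin 3).succ = 3 from rfl]
          linear_combination v 2 * zeta3_sum
        · simp [E, zeta3_inv, Matrix.vecHead, Matrix.vecTail, show (2:Fin 3).succ = 3 from rfl]
          linear_combination v 3 * (zeta3 ^ 3 + 2) * zeta3_cube
      rw [heq] at hu
      have h3 := Submodule.smul_mem W (3 * v 3)⁻¹ hu
      have hE3 : E 3 ∈ W := by
        rwa [smul_smul, inv_mul_cancel₀ (mul_ne_zero three_ne_zero (by simpa using hi)),
          one_smul] at h3
      exact t10 (t31 hE3)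
  have hE1 := t01 hE0
  have hE2 := t02 hE0
  have hE3 := t13 hE1
  have hE : ∀ j : Fin 4, E j ∈ W := by
    intro j
    fin_cases j <;> assumption
  rw [Submodule.eq_top_iff']
  intro x
  rw [pi_eq_sum_univ x]
  exact Submodule.sum_mem _ fun j _ => Submodule.smul_mem _ _ (hE j)

/-- The group generated by the five listed matrices lies in `SL(4, ℂ)`, acts
irreducibly on `ℂ⁴`, and has the cubic form `x³ + y³ + u³ + v³` as a semi-invariant. -/
theorem stmt_12 :
    (∀ g ∈ monomialGroup, Matrix.det (g : Matrix (Fin 4) (Fin 4) ℂ) = 1) ∧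
    (∀ W : Submodule ℂ (Fin 4 → ℂ),
      (∀ g ∈ monomialGroup, ∀ v ∈ W, Matrix.mulVec (g : Matrix (Fin 4) (Fin 4) ℂ) v ∈ W) →
      W = ⊥ ∨ W = ⊤) ∧
    (∃ χ : monomialGroup →* ℂˣ, ∀ (g : monomialGroup) (v : Fin 4 → ℂ),
      MvPolynomial.eval
          (Matrix.mulVec (((g : GL (Fin 4) ℂ)⁻¹ : GL (Fin 4) ℂ) : Matrix (Fin 4) (Fin 4) ℂ) v)
          (X 0 ^ 3 + X 1 ^ 3 + X 2 ^ 3 + X 3 ^ 3 : MvPolynomial (Fin 4) ℂ)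
        = (χ g : ℂ) *
          MvPolynomial.eval v (X 0 ^ 3 + X 1 ^ 3 + X 2 ^ 3 + X 3 ^ 3 : MvPolynomial (Fin 4) ℂ)) :=
  ⟨mono_det, fun W hW => mono_irred W hW, mono_semiinv⟩
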